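/- For every positive odd integer m and every positive integer n, F_m * (sum over k from 1 to n of (-1)^{k-1} L_{2mk}) = (-1)^{n-1} F_{mn} L_{mn+m}. -/

import Mathlib

/-- Fibonacci numbers extended to all integers via `F_{-n} = (-1)^{n-1} F_n`. -/
def fibZ (n : ℤ) : ℤ :=
  if 0 ≤ n then (Nat.fib n.toNat : ℤ) else (-1) ^ ((-n).toNat + 1) * (Nat.fib (-n).toNat : ℤ)

/-- Lucas numbers extended to all integers, `L_n = F_{n-1} + F_{n+1}`. -/
def lucasZ (n : ℤ) : ℤ := fibZ (n - 1) + fibZ (n + 1)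

lemma fibZ_ofNat (n : ℕ) : fibZ n = Nat.fib n := by
  simp [fibZ]

lemma fibZ_zero : fibZ 0 = 0 := by norm_num [fibZ]
lemma fibZ_one : fibZ 1 = 1 := by norm_num [fibZ]
lemma fibZ_two : fibZ 2 = 1 := by
  have := fibZ_ofNat 2
  norm_num [Nat.fib] at this ⊢
  exact_mod_cast this

lemma fibZ_neg_nat (k : ℕ) : fibZ (-(k:ℤ)) = (-1:ℤ)^(k+1) * Nat.fib k := by
  cases k with
  | zero => simp [fibZ]
  | succ j =>
    have hneg : ¬ (0:ℤ) ≤ -((j+1:ℕ):ℤ) := by push_cast; omega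
    rw [fibZ, if_neg hneg]
    norm_num

lemma fibZ_neg (n : ℤ) : fibZ (-n) = (n + 1).negOnePow * fibZ n := by
  rcases lt_trichotomy n 0 with h | h | h
  · obtain ⟨k, hk, rfl⟩ : ∃ k : ℕ, 0 < k ∧ n = -(k : ℤ) := by
      refine ⟨(-n).toNat, by omega, by omega⟩
    rw [neg_neg, fibZ_ofNat, fibZ_neg_nat]
    have : ((-(k:ℤ)) + 1).negOnePow = ((k:ℤ) + 1).negOnePow := by
      rw [Int.negOnePow_eq_iff]; exact ⟨-(k:ℤ), by ring⟩
    rw [this]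
    rcases Int.even_or_odd ((k:ℤ)+1) with he | ho
    · rw [Int.negOnePow_even _ he]
      obtain ⟨j, hj⟩ := he
      have : k + 1 = 2 * j.toNat := by omega
      rw [this]; simp [pow_mul]
    · rw [Int.negOnePow_odd _ ho]
      obtain ⟨j, hj⟩ := ho
      have : k + 1 = 2 * j.toNat + 1 := by omega
      rw [this]; simp [pow_mul, pow_succ]
  · subst h; simp [fibZ]
  · obtain ⟨k, hk, rfl⟩ : ∃ k : ℕ, 0 < k ∧ n = (k : ℤ) := ⟨n.toNat, by omega, by omega⟩
    rw [fibZ_neg_nat, fibZ_ofNat]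
    rcases Int.even_or_odd ((k:ℤ)+1) with he | ho
    · rw [Int.negOnePow_even _ he]
      obtain ⟨j, hj⟩ := he
      have : k + 1 = 2 * j.toNat := by omega
      rw [this]; simp [pow_mul]
    · rw [Int.negOnePow_odd _ ho]
      obtain ⟨j, hj⟩ := ho
      have : k + 1 = 2 * j.toNat + 1 := by omega
      rw [this]; simp [pow_mul, pow_succ]

lemma fibZ_add_two (n : ℤ) : fibZ (n + 2) = fibZ (n + 1) + fibZ n := by
  rcases le_or_gt 0 n with h | h
  · obtain ⟨k, rfl⟩ : ∃ k : ℕ, n = (k : ℤ) := ⟨n.toNat, by omega⟩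
    rw [show (k:ℤ) + 2 = ((k + 2 : ℕ) : ℤ) by push_cast; ring,
      show (k:ℤ) + 1 = ((k + 1 : ℕ) : ℤ) by push_cast; ring,
      fibZ_ofNat, fibZ_ofNat, fibZ_ofNat, Nat.fib_add_two]
    push_cast; ring
  · rcases eq_or_lt_of_le (by omega : n ≤ -1) with h1 | h1
    · rw [h1]
      norm_num [fibZ_one, fibZ_zero]
      rw [show (-1 : ℤ) = -((1:ℕ):ℤ) by norm_num, fibZ_neg_nat]
      norm_num
    · obtain ⟨i, rfl⟩ : ∃ i : ℕ, n = -((i:ℤ) + 2) := ⟨(-n-2).toNat, by omega⟩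
      rw [show -((i:ℤ)+2) + 2 = -((i:ℕ):ℤ) by push_cast; ring,
        show -((i:ℤ)+2) + 1 = -(((i+1:ℕ):ℤ)) by push_cast; ring,
        show -((i:ℤ)+2) = -(((i+2:ℕ):ℤ)) by push_cast; ring,
        fibZ_neg_nat, fibZ_neg_nat, fibZ_neg_nat, Nat.fib_add_two]
      push_cast; ring

lemma fibZ_add (a b : ℤ) : fibZ (a + b) = fibZ a * fibZ (b + 1) + fibZ (a - 1) * fibZ b := by
  have key : ∀ b : ℤ,
      (fibZ (a + b) = fibZ a * fibZ (b + 1) + fibZ (a - 1) * fibZ b) ∧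
      (fibZ (a + b + 1) = fibZ a * fibZ (b + 2) + fibZ (a - 1) * fibZ (b + 1)) := by
    intro b
    induction b using Int.induction_on with
    | zero =>
      constructor
      · norm_num [fibZ_one, fibZ_zero]
      · have hr := fibZ_add_two (a - 1)
        rw [show a - 1 + 2 = a + 0 + 1 by ring, show a - 1 + 1 = a by ring] at hr
        norm_num [fibZ_two, fibZ_one] at hr ⊢
        linarith
    | succ k ih =>
      obtain ⟨ih1, ih2⟩ := ih
      constructor
      · rw [show a + ((k:ℤ)+1) = a + (k:ℤ) + 1 by ring,
          show (k:ℤ)+1+1 = (k:ℤ)+2 by ring]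
        exact ih2
      · have r1 := fibZ_add_two (a + (k:ℤ))
        have r2 := fibZ_add_two (k:ℤ)
        have r3 := fibZ_add_two ((k:ℤ)+1)
        rw [show (k:ℤ)+1+2 = (k:ℤ)+3 by ring, show (k:ℤ)+1+1 = (k:ℤ)+2 by ring] at r3
        rw [show a + ((k:ℤ)+1) + 1 = a + (k:ℤ) + 2 by ring,
          show (k:ℤ)+1+2 = (k:ℤ)+3 by ring, show (k:ℤ)+1+1 = (k:ℤ)+2 by ring]
        linear_combination r1 + ih2 + ih1 - fibZ a * r3 - fibZ (a-1) * r2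
    | pred k ih =>
      obtain ⟨ih1, ih2⟩ := ih
      rw [show a + -(k:ℤ) = a - (k:ℤ) by ring] at ih1 ih2
      constructor
      · have r1 := fibZ_add_two (a - (k:ℤ) - 1)
        rw [show a - (k:ℤ) - 1 + 2 = a - (k:ℤ) + 1 by ring,
          show a - (k:ℤ) - 1 + 1 = a - (k:ℤ) by ring] at r1
        have r2 := fibZ_add_two (-(k:ℤ) - 1)
        rw [show -(k:ℤ) - 1 + 2 = -(k:ℤ) + 1 by ring,
          show -(k:ℤ) - 1 + 1 = -(k:ℤ) by ring] at r2
        have r3 := fibZ_add_two (-(k:ℤ))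
        rw [show a + (-(k:ℤ) - 1) = a - (k:ℤ) - 1 by ring,
          show -(k:ℤ) - 1 + 1 = -(k:ℤ) by ring]
        linear_combination (-1) * r1 + ih2 - ih1 + fibZ a * r3 + fibZ (a-1) * r2
      · rw [show a + (-(k:ℤ) - 1) + 1 = a - (k:ℤ) by ring,
          show -(k:ℤ) - 1 + 2 = -(k:ℤ) + 1 by ring,
          show -(k:ℤ) - 1 + 1 = -(k:ℤ) by ring]
        exact ih1
  exact (key b).1

lemma fibZ_mul_lucasZ (a b : ℤ) :
    fibZ a * lucasZ b = fibZ (a + b) + b.negOnePow * fibZ (a - b) := by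
  have h1 : fibZ (a + b) = fibZ a * fibZ (b + 1) + fibZ (a - 1) * fibZ b := fibZ_add a b
  have h2 : fibZ (a - b) = fibZ a * fibZ (-b + 1) + fibZ (a - 1) * fibZ (-b) := by
    rw [show a - b = a + (-b) by ring]; exact fibZ_add a (-b)
  have h3 : fibZ (-b + 1) = b.negOnePow * fibZ (b - 1) := by
    rw [show -b + 1 = -(b - 1) by ring, fibZ_neg, show b - 1 + 1 = b by ring]
  have h4 : fibZ (-b) = (b + 1).negOnePow * fibZ b := fibZ_neg b
  have hs : ((b.negOnePow : ℤˣ) : ℤ) * ((b.negOnePow : ℤˣ) : ℤ) = 1 := by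
    rw [← Units.val_mul, ← Int.negOnePow_add, Int.negOnePow_even _ ⟨b, by ring⟩, Units.val_one]
  have hs2 : ((b.negOnePow : ℤˣ) : ℤ) * (((b + 1).negOnePow : ℤˣ) : ℤ) = -1 := by
    rw [← Units.val_mul, ← Int.negOnePow_add, Int.negOnePow_odd _ ⟨b, by ring⟩]; rfl
  rw [lucasZ, h1, h2, h3, h4]
  linear_combination (-(fibZ a * fibZ (b-1))) * hs - (fibZ (a-1) * fibZ b) * hs2

theorem stmt19 (m : ℤ) (hm : 0 < m) (hmo : Odd m) (n : ℕ) (hn : 0 < n) :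
    fibZ m * ∑ k ∈ Finset.Icc 1 n,
        (((-1 : ℤˣ) ^ ((k : ℤ) - 1) : ℤˣ) : ℤ) * lucasZ (2 * m * k)
      = (((-1 : ℤˣ) ^ ((n : ℤ) - 1) : ℤˣ) : ℤ) * fibZ (m * n) * lucasZ (m * n + m) := by
  have sgn : ∀ j : ℤ, (((-1 : ℤˣ) ^ j : ℤˣ) : ℤ) = ((j.negOnePow : ℤˣ) : ℤ) := fun j => rfl
  induction n, hn using Nat.le_induction with
  | base =>
    rw [Finset.Icc_self, Finset.sum_singleton]
    push_cast
    rw [zpow_zero,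
      show (2:ℤ) * m * 1 = m + m by ring, show m * (1:ℤ) + m = m + m by ring]
    push_cast
    ring
  | succ n hn ih =>
    rw [Finset.sum_Icc_succ_top (by omega : 1 ≤ n + 1), mul_add, ih]
    obtain ⟨j, hj⟩ := id hmo
    have hm2 : Even (m + 1) := ⟨j+1, by omega⟩
    have key : fibZ m * lucasZ (2*m*(n:ℤ)+2*m) - fibZ (m*(n:ℤ)) * lucasZ (m*(n:ℤ)+m)
        = fibZ (m*(n:ℤ)+m) * lucasZ (m*(n:ℤ)+m+m) := by
      have e1 := fibZ_mul_lucasZ m (2*m*(n:ℤ)+2*m)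
      have e2 := fibZ_mul_lucasZ (m*(n:ℤ)) (m*(n:ℤ)+m)
      have e3 := fibZ_mul_lucasZ (m*(n:ℤ)+m) (m*(n:ℤ)+m+m)
      have hmodd := Int.negOnePow_odd _ hmo
      have s1 : ((2*m*(n:ℤ)+2*m).negOnePow : ℤ) = 1 := by
        rw [Int.negOnePow_even _ ⟨m*(n:ℤ)+m, by ring⟩]; rfl
      have s2 : ((m*(n:ℤ)+m).negOnePow : ℤ) = -(((m*(n:ℤ)).negOnePow : ℤ)) := by
        rw [Int.negOnePow_add, hmodd]; push_cast; ring
      have s3 : ((m*(n:ℤ)+m+m).negOnePow : ℤ) = ((m*(n:ℤ)).negOnePow : ℤ) := by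
        rw [Int.negOnePow_add, Int.negOnePow_add, hmodd]; push_cast; ring
      have f1 : fibZ (m - (2*m*(n:ℤ)+2*m)) = fibZ (2*m*(n:ℤ)+m) := by
        rw [show m - (2*m*(n:ℤ)+2*m) = -(2*m*(n:ℤ)+m) by ring, fibZ_neg,
          Int.negOnePow_even _ ⟨m*(n:ℤ)+j+1, by subst hj; ring⟩]
        push_cast; ring
      have f2 : fibZ (m*(n:ℤ) - (m*(n:ℤ)+m)) = fibZ m := by
        rw [show m*(n:ℤ) - (m*(n:ℤ)+m) = -m by ring, fibZ_neg,
          Int.negOnePow_even _ hm2]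
        push_cast; ring
      have f3 : fibZ (m*(n:ℤ)+m - (m*(n:ℤ)+m+m)) = fibZ m := by
        rw [show m*(n:ℤ)+m - (m*(n:ℤ)+m+m) = -m by ring, fibZ_neg,
          Int.negOnePow_even _ hm2]
        push_cast; ring
      rw [f1, s1] at e1
      rw [f2, s2] at e2
      rw [f3, s3] at e3
      rw [show m + (2*m*(n:ℤ)+2*m) = 2*m*(n:ℤ)+3*m by ring] at e1
      rw [show m*(n:ℤ) + (m*(n:ℤ)+m) = 2*m*(n:ℤ)+m by ring] at e2
      rw [show m*(n:ℤ)+m + (m*(n:ℤ)+m+m) = 2*m*(n:ℤ)+3*m by ring] at e3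
      linarith
    push_cast
    rw [sgn ((n:ℤ)+1-1), sgn ((n:ℤ)-1)]
    have sA : ((((n:ℤ)+1-1).negOnePow : ℤˣ) : ℤ) = -((((n:ℤ)-1).negOnePow : ℤˣ) : ℤ) := by
      rw [show (n:ℤ)+1-1 = ((n:ℤ)-1)+1 by ring, Int.negOnePow_succ]; push_cast; ring
    rw [sA,
      show (2:ℤ)*m*((n:ℤ)+1) = 2*m*(n:ℤ)+2*m by ring,
      show m*((n:ℤ)+1) = m*(n:ℤ)+m by ring,
      show m*(n:ℤ)+m+m = m*(n:ℤ)+m+m from rfl]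
    linear_combination (-((((n:ℤ)-1).negOnePow : ℤˣ) : ℤ)) * key
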